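/- For a Schröder tree t, c_t(q) = θ(sk(t)): the coefficient ∏_{v internal of t} 1/(q^{φ(v)-1}-1) equals ∏_{w vertex of sk(t)} 1/(q^{|sk(t)_w|}-1), where sk is the skeleton map and |·| sums decorations. -/

import Mathlib

noncomputable section

/-- Reduced plane (Schröder) trees: every internal vertex has at least two children. -/
inductive STree where
  | leaf : STree
  | node (a b : STree) (l : List STree) : STree

/-- Rooted trees decorated by positive integers. -/
inductive DTree where
  | node (d : ℕ+) (ch : List DTree) : DTree

mutual
  /-- Number of leaves of a Schröder tree. -/
  def leavesT : STree → ℕ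
    | .leaf => 1
    | .node a b l => leavesT a + leavesT b + leavesL l
  def leavesL : List STree → ℕ
    | [] => 0
    | t :: ts => leavesT t + leavesL ts
end

mutual
  /-- `c_t(q) = ∏_{v internal vertex of t} 1/(q^{φ(v)-1} - 1)`, with `φ(v)` the number of
  leaves below `v`. -/
  def cProd : STree → RatFunc ℚ
    | .leaf => 1
    | .node a b l =>
        ((RatFunc.X : RatFunc ℚ) ^ (leavesT (.node a b l) - 1) - 1)⁻¹ *
          (cProd a * cProd b * cProdL l)
  def cProdL : List STree → RatFunc ℚ
    | [] => 1
    | t :: ts => cProd t * cProdL ts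
end

mutual
  /-- The skeleton map: delete the leaves and decorate each internal vertex of arity `k`
  by `k - 1` (`sk(leaf)` is the empty forest). -/
  def skT : STree → List DTree
    | .leaf => []
    | .node a b l =>
        [DTree.node ⟨1 + l.length, by omega⟩ (skT a ++ skT b ++ skL l)]
  def skL : List STree → List DTree
    | [] => []
    | t :: ts => skT t ++ skL ts
end

mutual
  /-- `|T|`: the sum of the decorations of `T`. -/
  def wtT : DTree → ℕ
    | .node d ch => (d : ℕ) + wtL ch
  def wtL : List DTree → ℕ
    | [] => 0
    | t :: ts => wtT t + wtL ts
end

mutual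
  /-- `θ(T) = ∏_{v ∈ T} 1/(q^{|T_v|} - 1)`. -/
  def thetaProd : DTree → RatFunc ℚ
    | .node d ch =>
        ((RatFunc.X : RatFunc ℚ) ^ (wtT (.node d ch)) - 1)⁻¹ * thetaProdL ch
  def thetaProdL : List DTree → RatFunc ℚ
    | [] => 1
    | t :: ts => thetaProd t * thetaProdL ts
end

theorem wtL_append (a b : List DTree) : wtL (a ++ b) = wtL a + wtL b := by
  induction a with
  | nil => simp [wtL]
  | cons t ts ih => simp [wtL, ih]; ring

theorem thetaProdL_append (a b : List DTree) :
    thetaProdL (a ++ b) = thetaProdL a * thetaProdL b := by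
  induction a with
  | nil => simp [thetaProdL]
  | cons t ts ih => simp [thetaProdL, ih]; ring

mutual
theorem leavesT_pos (t : STree) : 1 ≤ leavesT t := by
  cases t with
  | leaf => simp [leavesT]
  | node a b l => have := leavesT_pos a; simp [leavesT]; omega
theorem leavesL_pos (l : List STree) : l.length ≤ leavesL l := by
  cases l with
  | nil => simp [leavesL]
  | cons t ts =>
      have := leavesT_pos t; have := leavesL_pos ts
      simp [leavesL]; omega
end

mutual
theorem wt_skT (t : STree) : wtL (skT t) + 1 = leavesT t := by
  cases t with
  | leaf => simp [skT, wtL, leavesT]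
  | node a b l =>
      have ha := wt_skT a; have hb := wt_skT b; have hl := wt_skL l
      simp [skT, wtL, wtT, wtL_append, leavesT]
      omega
theorem wt_skL (l : List STree) : wtL (skL l) + l.length = leavesL l := by
  cases l with
  | nil => simp [skL, wtL, leavesL]
  | cons t ts =>
      have := wt_skT t; have := wt_skL ts
      simp [skL, wtL_append, leavesL, List.length]
      omega
end

mutual
theorem c_eq_thetaT (t : STree) : cProd t = thetaProdL (skT t) := by
  cases t with
  | leaf => simp [cProd, skT, thetaProdL]
  | node a b l =>
      have ha := c_eq_thetaT a; have hb := c_eq_thetaT b; have hl := c_eq_thetaL l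
      have ha' := wt_skT a; have hb' := wt_skT b; have hl' := wt_skL l
      have hpa := leavesT_pos a; have hpb := leavesT_pos b
      have hexp : leavesT (.node a b l) - 1 =
          wtT (DTree.node ⟨1 + l.length, by omega⟩ (skT a ++ skT b ++ skL l)) := by
        simp [leavesT, wtT, wtL_append]; omega
      rw [cProd, skT, thetaProdL, thetaProdL]
      simp only [thetaProd]
      rw [hexp, ha, hb, hl,
        thetaProdL_append, thetaProdL_append]
      ring
theorem c_eq_thetaL (l : List STree) : cProdL l = thetaProdL (skL l) := by
  cases l with
  | nil => simp [cProdL, skL, thetaProdL]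
  | cons t ts =>
      rw [cProdL, skL, thetaProdL_append, c_eq_thetaT t, c_eq_thetaL ts]
end

/-- **`c_t(q) = θ(sk(t))`.** For every Schröder tree `t`, the coefficient
`∏_{v internal vertex of t} 1/(q^{φ(v)-1} - 1)` equals the value of Ecalle's character
`∏_{w vertex of sk(t)} 1/(q^{|sk(t)_w|} - 1)` on the skeleton forest of `t`. -/
theorem c_eq_theta_of_skeleton (t : STree) :
    cProd t = thetaProdL (skT t) := by
  exact c_eq_thetaT t
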